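/- Let λ > 1, a ∈ ℝⁿ \ {0}, f(x) = λ(x - a) + a, and h(x) = λx, and let G be the group generated by f and h. Then for every p, q ∈ ℤ, the point q·λ^p·(1 - λ^p)·a + a belongs to the orbit G(a), and the orbit G(a) is contained in the line ℝa. -/

import Mathlib

theorem stmt_6 {n : ℕ} (l : ℝ) (hl : 1 < l) (a : Fin n → ℝ) (ha : a ≠ 0)
    (f h : Equiv.Perm (Fin n → ℝ))
    (hf : ∀ x, f x = l • (x - a) + a) (hh : ∀ x, h x = l • x)
    (G : Subgroup (Equiv.Perm (Fin n → ℝ))) (hG : G = Subgroup.closure {f, h}) :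
    (∀ p q : ℤ, ((q : ℝ) * l ^ p * (1 - l ^ p)) • a + a ∈ {y | ∃ g ∈ G, g a = y}) ∧
    {y | ∃ g ∈ G, g a = y} ⊆ {y | ∃ t : ℝ, y = t • a} := by
  subst hG
  have hl0 : l ≠ 0 := ne_of_gt (lt_trans one_pos hl)
  -- inverse formulas
  have hfi : ∀ x, f⁻¹ x = l⁻¹ • (x - a) + a := by
    intro x
    have key : f (l⁻¹ • (x - a) + a) = x := by
      rw [hf]
      have h1 : l⁻¹ • (x - a) + a - a = l⁻¹ • (x - a) := by abel
      rw [h1, smul_smul, mul_inv_cancel₀ hl0, one_smul]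
      abel
    conv_lhs => rw [← key]
    exact Equiv.symm_apply_apply f _
  have hhi : ∀ x, h⁻¹ x = l⁻¹ • x := by
    intro x
    have key : h (l⁻¹ • x) = x := by
      rw [hh, smul_smul, mul_inv_cancel₀ hl0, one_smul]
    conv_lhs => rw [← key]
    exact Equiv.symm_apply_apply h _
  -- zpow formulas
  have hhp : ∀ p : ℤ, ∀ x, (h ^ p) x = l ^ p • x := by
    intro p
    induction p using Int.induction_on with
    | zero => intro x; simp
    | succ k ih =>
      intro x
      rw [zpow_add_one, Equiv.Perm.mul_apply, hh, ih, smul_smul,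
        ← zpow_add_one₀ hl0]
    | pred k ih =>
      intro x
      rw [zpow_sub_one, Equiv.Perm.mul_apply, hhi, ih, smul_smul,
        ← zpow_sub_one₀ hl0]
  have hfp : ∀ p : ℤ, ∀ x, (f ^ p) x = l ^ p • (x - a) + a := by
    intro p
    induction p using Int.induction_on with
    | zero => intro x; simp
    | succ k ih =>
      intro x
      rw [zpow_add_one, Equiv.Perm.mul_apply, ih, hf]
      have h1 : l • (x - a) + a - a = l • (x - a) := by abel
      rw [h1, smul_smul, ← zpow_add_one₀ hl0]
    | pred k ih =>
      intro x
      rw [zpow_sub_one, Equiv.Perm.mul_apply, ih, hfi]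
      have h1 : l⁻¹ • (x - a) + a - a = l⁻¹ • (x - a) := by abel
      rw [h1, smul_smul, ← zpow_sub_one₀ hl0]
  constructor
  · intro p q
    set t : Equiv.Perm (Fin n → ℝ) := h ^ p * f ^ p * h ^ (-(2 * p)) with ht
    have htx : ∀ x, t x = x + (l ^ p * (1 - l ^ p)) • a := by
      intro x
      rw [ht, Equiv.Perm.mul_apply, Equiv.Perm.mul_apply, hhp, hfp, hhp]
      have hs : l ^ p • (l ^ p • (l ^ (-(2 * p)) • x - a) + a)
          = (l ^ p * l ^ p * l ^ (-(2 * p))) • x - (l ^ p * l ^ p) • a + l ^ p • a := by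
        module
      rw [hs]
      have h2 : l ^ p * l ^ p * l ^ (-(2 * p)) = 1 := by
        rw [← zpow_add₀ hl0, ← zpow_add₀ hl0]
        norm_num
        rw [show p + p + -(2 * p) = 0 by ring, zpow_zero]
      rw [h2, one_smul]
      module
    have hti : ∀ x, t⁻¹ x = x - (l ^ p * (1 - l ^ p)) • a := by
      intro x
      have key : t (x - (l ^ p * (1 - l ^ p)) • a) = x := by
        rw [htx]; abel
      conv_lhs => rw [← key]
      exact Equiv.symm_apply_apply t _
    have htq : ∀ r : ℤ, ∀ x, (t ^ r) x = x + ((r : ℝ) * (l ^ p * (1 - l ^ p))) • a := by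
      intro r
      induction r using Int.induction_on with
      | zero => intro x; simp
      | succ k ih =>
        intro x
        rw [zpow_add_one, Equiv.Perm.mul_apply, ih, htx]
        push_cast
        module
      | pred k ih =>
        intro x
        rw [zpow_sub_one, Equiv.Perm.mul_apply, ih, hti]
        push_cast
        module
    refine ⟨t ^ q, ?_, ?_⟩
    · have hfm : f ∈ Subgroup.closure {f, h} := Subgroup.subset_closure (by simp)
      have hhm : h ∈ Subgroup.closure {f, h} := Subgroup.subset_closure (by simp)
      exact zpow_mem (mul_mem (mul_mem (zpow_mem hhm p) (zpow_mem hfm p))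
        (zpow_mem hhm (-(2 * p)))) q
    · rw [htq]
      module
  · intro y hy
    obtain ⟨g, hg, hga⟩ := hy
    have key : ∀ g ∈ Subgroup.closure {f, h},
        (∀ s : ℝ, ∃ u : ℝ, g (s • a) = u • a) ∧
        (∀ s : ℝ, ∃ u : ℝ, g⁻¹ (s • a) = u • a) := by
      intro g hg
      induction hg using Subgroup.closure_induction with
      | mem x hx =>
        rcases hx with hx | hx
        · subst hx
          constructor
          · intro s
            exact ⟨l * (s - 1) + 1, by rw [hf]; module⟩
          · intro s
            exact ⟨l⁻¹ * (s - 1) + 1, by rw [hfi]; module⟩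
        · subst hx
          constructor
          · intro s
            exact ⟨l * s, by rw [hh]; module⟩
          · intro s
            exact ⟨l⁻¹ * s, by rw [hhi]; module⟩
      | one => exact ⟨fun s => ⟨s, by simp⟩, fun s => ⟨s, by simp⟩⟩
      | mul x y hx hy ihx ihy =>
        constructor
        · intro s
          obtain ⟨u, hu⟩ := ihy.1 s
          obtain ⟨v, hv⟩ := ihx.1 u
          exact ⟨v, by rw [Equiv.Perm.mul_apply, hu, hv]⟩
        · intro s
          obtain ⟨u, hu⟩ := ihx.2 s
          obtain ⟨v, hv⟩ := ihy.2 u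
          exact ⟨v, by rw [mul_inv_rev, Equiv.Perm.mul_apply, hu, hv]⟩
      | inv x hx ihx =>
        exact ⟨ihx.2, by simpa using ihx.1⟩
    obtain ⟨u, hu⟩ := (key g hg).1 1
    rw [one_smul] at hu
    exact ⟨u, by rw [← hga, hu]⟩
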